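/- There are infinitely many triples (a, b, c) of positive integers with a² + b² = c², such that a, b and c are all practical numbers and gcd(a, b, c) = 4. In particular, for every nonnegative integer k, the triple a = 2(3^(3^k·70) − 1), b = 4·3^(3^k·35), c = 2(3^(3^k·70) + 1) satisfies a² + b² = c², gcd(a, b, c) = 4, and a, b, c are all practical. -/

import Mathlib

/-- A positive integer `m` is practical if every `n` with `1 ≤ n ≤ m` is a sum of
distinct positive divisors of `m`. -/
def Practical (m : ℕ) : Prop :=
  0 < m ∧ ∀ n : ℕ, 1 ≤ n → n ≤ m → ∃ s : Finset ℕ, s ⊆ m.divisors ∧ ∑ d ∈ s, d = n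

/-- Complete-sequence lemma. -/
lemma rep_of_complete (D : Finset ℕ)
    (h : ∀ d ∈ D, d ≤ 1 + ∑ e ∈ D.filter (· < d), e) :
    ∀ n, n ≤ ∑ e ∈ D, e → ∃ s ⊆ D, ∑ d ∈ s, d = n := by
  induction D using Finset.strongInduction with
  | _ D ih =>
    intro n hn
    rcases D.eq_empty_or_nonempty with rfl | hne
    · simp at hn
      exact ⟨∅, Finset.Subset.refl _, by simp [hn]⟩
    · set M := D.max' hne with hM
      have hMD : M ∈ D := D.max'_mem hne
      have hfilt : D.filter (· < M) = D.erase M := by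
        ext a
        simp only [Finset.mem_filter, Finset.mem_erase]
        constructor
        · rintro ⟨ha, hlt⟩; exact ⟨ne_of_lt hlt, ha⟩
        · rintro ⟨hne', ha⟩
          exact ⟨ha, lt_of_le_of_ne (D.le_max' a ha) hne'⟩
      have hsplit : ∑ e ∈ D, e = M + ∑ e ∈ D.erase M, e :=
        (Finset.add_sum_erase D id hMD).symm
      have hcond : ∀ d ∈ D.erase M, d ≤ 1 + ∑ e ∈ (D.erase M).filter (· < d), e := by
        intro d hd
        have hdD : d ∈ D := Finset.mem_of_mem_erase hd
        have : D.filter (· < d) = (D.erase M).filter (· < d) := by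
          ext a
          simp only [Finset.mem_filter, Finset.mem_erase]
          constructor
          · rintro ⟨ha, hlt⟩
            refine ⟨⟨?_, ha⟩, hlt⟩
            rintro rfl
            have : d ≤ M := D.le_max' d hdD
            omega
          · rintro ⟨⟨_, ha⟩, hlt⟩; exact ⟨ha, hlt⟩
        rw [← this]; exact h d hdD
      by_cases hcase : n ≤ ∑ e ∈ D.erase M, e
      · obtain ⟨s, hs, hsum⟩ := ih (D.erase M) (D.erase_ssubset hMD) hcond n hcase
        exact ⟨s, hs.trans (D.erase_subset M), hsum⟩
      · have hMn : M ≤ n := by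
          have := h M hMD
          rw [hfilt] at this
          omega
        obtain ⟨s, hs, hsum⟩ := ih (D.erase M) (D.erase_ssubset hMD) hcond (n - M)
          (by omega)
        refine ⟨insert M s, ?_, ?_⟩
        · intro a ha
          rcases Finset.mem_insert.mp ha with rfl | ha
          · exact hMD
          · exact Finset.mem_of_mem_erase (hs ha)
        · have hMs : M ∉ s := fun hc => (Finset.mem_erase.mp (hs hc)).1 rfl
          rw [Finset.sum_insert hMs, hsum]
          omega

/-- A practical number represents everything up to the sum of its divisors. -/
lemma practical_rep {m : ℕ} (hm : Practical m) :
    ∀ n, n ≤ ∑ d ∈ m.divisors, d → ∃ s ⊆ m.divisors, ∑ d ∈ s, d = n := by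
  apply rep_of_complete
  intro d hd
  obtain ⟨hdvd, hm0⟩ := Nat.mem_divisors.mp hd
  have hd1 : 1 ≤ d := Nat.pos_of_dvd_of_pos hdvd (Nat.pos_of_ne_zero hm0)
  rcases eq_or_lt_of_le hd1 with rfl | hd2
  · omega
  · have hdm : d ≤ m := Nat.le_of_dvd (Nat.pos_of_ne_zero hm0) hdvd
    obtain ⟨s, hs, hsum⟩ := hm.2 (d - 1) (by omega) (by omega)
    have hsub : s ⊆ m.divisors.filter (· < d) := by
      intro a ha
      refine Finset.mem_filter.mpr ⟨hs ha, ?_⟩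
      have : a ≤ ∑ d ∈ s, d := Finset.single_le_sum (fun i _ => Nat.zero_le i) ha
      omega
    have := Finset.sum_le_sum_of_subset hsub (f := id)
    simp only [id] at this
    omega

lemma m_le_sigma {m : ℕ} (hm : 0 < m) : m ≤ ∑ d ∈ m.divisors, d :=
  Finset.single_le_sum (fun i _ => Nat.zero_le i)
    (Nat.mem_divisors.mpr ⟨dvd_refl m, hm.ne'⟩)

lemma two_mul_le_sigma {m : ℕ} (hm : Practical m) : 2 * m ≤ 1 + ∑ d ∈ m.divisors, d := by
  rcases eq_or_lt_of_le (show 1 ≤ m from hm.1) with h1 | h2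
  · simp [← h1]
  · obtain ⟨s, hs, hsum⟩ := hm.2 (m - 1) (by omega) (by omega)
    have hms : m ∉ s := by
      intro hc
      have : m ≤ ∑ d ∈ s, d := Finset.single_le_sum (fun i _ => Nat.zero_le i) hc
      omega
    have hsub : insert m s ⊆ m.divisors := by
      intro a ha
      rcases Finset.mem_insert.mp ha with rfl | ha
      · exact Nat.mem_divisors.mpr ⟨dvd_refl a, hm.1.ne'⟩
      · exact hs ha
    have := Finset.sum_le_sum_of_subset hsub (f := id)
    simp only [id] at this
    rw [Finset.sum_insert hms] at this
    omega

lemma practical_mul_prime {m p : ℕ} (hm : Practical m) (hp : p.Prime)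
    (hple : p ≤ 1 + ∑ d ∈ m.divisors, d) : Practical (m * p) := by
  have hm0 := hm.1
  have hp0 := hp.pos
  refine ⟨Nat.mul_pos hm0 hp0, ?_⟩
  intro n hn1 hn2
  obtain ⟨s₁, hs₁, hsum₁⟩ := practical_rep hm (n % p)
    (by have := Nat.mod_lt n hp0; omega)
  have hqm : n / p ≤ m := Nat.div_le_of_le_mul (by rw [mul_comm]; exact hn2)
  obtain ⟨s₂, hs₂, hsum₂⟩ := practical_rep hm (n / p) (le_trans hqm (m_le_sigma hm0))
  refine ⟨s₁ ∪ s₂.image (· * p), ?_, ?_⟩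
  · intro a ha
    rcases Finset.mem_union.mp ha with ha | ha
    · have := Nat.mem_divisors.mp (hs₁ ha)
      exact Nat.mem_divisors.mpr ⟨this.1.mul_right p, by positivity⟩
    · obtain ⟨b, hb, rfl⟩ := Finset.mem_image.mp ha
      have := Nat.mem_divisors.mp (hs₂ hb)
      exact Nat.mem_divisors.mpr ⟨Nat.mul_dvd_mul this.1 dvd_rfl, by positivity⟩
  · have hdisj : Disjoint s₁ (s₂.image (· * p)) := by
      rw [Finset.disjoint_left]
      intro a ha hc
      obtain ⟨b, hb, rfl⟩ := Finset.mem_image.mp hc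
      have hb1 : 1 ≤ b := Nat.pos_of_mem_divisors (hs₂ hb)
      have : b * p ≤ ∑ d ∈ s₁, d := Finset.single_le_sum (fun i _ => Nat.zero_le i) ha
      have : p ≤ b * p := Nat.le_mul_of_pos_left p hb1
      have := Nat.mod_lt n hp0
      omega
    rw [Finset.sum_union hdisj, hsum₁, Finset.sum_image (by
      intro a _ b _ hab
      exact Nat.eq_of_mul_eq_mul_right hp0 hab)]
    have : ∑ x ∈ s₂, x * p = (∑ x ∈ s₂, x) * p := by rw [Finset.sum_mul]
    rw [this, hsum₂]
    exact Nat.mod_add_div' n p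

lemma sigma_mono {m M : ℕ} (hM : M ≠ 0) (h : m ∣ M) :
    ∑ d ∈ m.divisors, d ≤ ∑ d ∈ M.divisors, d :=
  Finset.sum_le_sum_of_subset (Nat.divisors_subset_of_dvd hM h)

lemma practical_mul_sigma {n : ℕ} : ∀ {m : ℕ}, Practical m → 1 ≤ n →
    n ≤ 1 + ∑ d ∈ m.divisors, d → Practical (m * n) := by
  induction n using Nat.strong_induction_on with
  | _ n ih =>
    intro m hm hn1 hn2
    rcases eq_or_lt_of_le hn1 with h1 | h2
    · rw [← h1, mul_one]; exact hm
    · have hp := Nat.minFac_prime (by omega : n ≠ 1)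
      have hpd : n.minFac ∣ n := Nat.minFac_dvd n
      have hple : n.minFac ≤ 1 + ∑ d ∈ m.divisors, d :=
        le_trans (Nat.le_of_dvd (by omega) hpd) hn2
      have hmp : Practical (m * n.minFac) := practical_mul_prime hm hp hple
      have hlt : n / n.minFac < n := Nat.div_lt_self (by omega) hp.two_le
      have h1' : 1 ≤ n / n.minFac := Nat.one_le_div_iff hp.pos |>.mpr (Nat.le_of_dvd (by omega) hpd)
      have h2' : n / n.minFac ≤ 1 + ∑ d ∈ (m * n.minFac).divisors, d := by
        have hs := sigma_mono (M := m * n.minFac)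
          (Nat.mul_pos hm.1 hp.pos).ne' ⟨n.minFac, rfl⟩
        have hdle : n / n.minFac ≤ n := Nat.div_le_self n _
        omega
      have := ih (n / n.minFac) hlt hmp h1' h2'
      rwa [mul_assoc, Nat.mul_div_cancel' hpd] at this

lemma practical_mul_le {m n : ℕ} (hm : Practical m) (hn1 : 1 ≤ n) (hn : n ≤ 2 * m) :
    Practical (m * n) :=
  practical_mul_sigma hm hn1 (le_trans hn (two_mul_le_sigma hm))

lemma practical_one : Practical 1 := by
  refine ⟨one_pos, fun n h1 h2 => ⟨{1}, ?_, by simp; omega⟩⟩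
  simp [Nat.divisors]

lemma practical_step {m : ℕ} (n N : ℕ) (hm : Practical m) (hn1 : 1 ≤ n) (hn : n ≤ 2 * m)
    (hN : m * n = N) : Practical N := hN ▸ practical_mul_le hm hn1 hn

lemma practical_two : Practical 2 := practical_step 2 2 practical_one one_le_two (by norm_num) (by norm_num)
lemma practical_four : Practical 4 := practical_step 2 4 practical_two one_le_two (by norm_num) (by norm_num)
lemma practical_sixteen : Practical 16 := practical_step 4 16 practical_four (by norm_num) (by norm_num) (by norm_num)

lemma practical_B (n : ℕ) : Practical (4 * 3 ^ n) := by
  induction n with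
  | zero => simpa using practical_four
  | succ n ih =>
    have h3 : (3:ℕ) ≤ 2 * (4 * 3 ^ n) := by
      have : (1:ℕ) ≤ 3 ^ n := Nat.one_le_pow _ _ (by norm_num)
      omega
    have := practical_mul_le ih (by norm_num) h3
    have e : 4 * 3 ^ n * 3 = 4 * 3 ^ (n + 1) := by ring
    rwa [e] at this

lemma practical_A0 : Practical (2 * (3 ^ 70 - 1)) := by
  have h := practical_sixteen
  have h := practical_step 11 176 h (by norm_num) (by norm_num) (by norm_num)
  have h := practical_step 11 1936 h (by norm_num) (by norm_num) (by norm_num)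
  have h := practical_step 61 118096 h (by norm_num) (by norm_num) (by norm_num)
  have h := practical_step 71 8384816 h (by norm_num) (by norm_num) (by norm_num)
  have h := practical_step 547 4586494352 h (by norm_num) (by norm_num) (by norm_num)
  have h := practical_step 1093 5013038326736 h (by norm_num) (by norm_num) (by norm_num)
  have h := practical_step 2664097031 13355220522546585520816 h (by norm_num) (by norm_num) (by norm_num)
  have h := practical_step 374857981681 5006311009986483202631143972171696 h (by norm_num) (by norm_num) (by norm_num)
  have e : (2 * (3 ^ 70 - 1) : ℕ) = 5006311009986483202631143972171696 := by norm_num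
  rwa [e]

lemma practical_C0 : Practical (2 * (3 ^ 70 + 1)) := by
  have h := practical_four
  have h := practical_step 5 20 h (by norm_num) (by norm_num) (by norm_num)
  have h := practical_step 5 100 h (by norm_num) (by norm_num) (by norm_num)
  have h := practical_step 29 2900 h (by norm_num) (by norm_num) (by norm_num)
  have h := practical_step 1181 3424900 h (by norm_num) (by norm_num) (by norm_num)
  have h := practical_step 16493 56486875700 h (by norm_num) (by norm_num) (by norm_num)
  have h := practical_step 28596961 1615352981404747700 h (by norm_num) (by norm_num) (by norm_num)
  have h := practical_step 32839661 53047644304671218258529700 h (by norm_num) (by norm_num) (by norm_num)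
  have h := practical_step 94373861 5006311009986483202631143972171700 h (by norm_num) (by norm_num) (by norm_num)
  have e : (2 * (3 ^ 70 + 1) : ℕ) = 5006311009986483202631143972171700 := by norm_num
  rwa [e]

lemma practical_A_step {y : ℕ} (hy : 3 ≤ y) (h : Practical (2 * (y ^ 2 - 1))) :
    Practical (2 * (y ^ 6 - 1)) := by
  have hy2 : 1 ≤ y ^ 2 := Nat.one_le_pow _ _ (by omega)
  have hy6 : 1 ≤ y ^ 6 := Nat.one_le_pow _ _ (by omega)
  have hyy : 3 * y ≤ y ^ 2 := by nlinarith
  have hb1 : y ^ 2 + 1 - y ≤ 2 * (2 * (y ^ 2 - 1)) := by omega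
  have h := practical_mul_le h (by omega) hb1
  have hb2 : y ^ 2 + y + 1 ≤ 2 * (2 * (y ^ 2 - 1) * (y ^ 2 + 1 - y)) := by
    have h1 : 1 ≤ y ^ 2 + 1 - y := by omega
    have : 2 * (y ^ 2 - 1) * 1 ≤ 2 * (y ^ 2 - 1) * (y ^ 2 + 1 - y) :=
      Nat.mul_le_mul_left _ h1
    omega
  have h := practical_mul_le h (by omega) hb2
  have e : 2 * (y ^ 2 - 1) * (y ^ 2 + 1 - y) * (y ^ 2 + y + 1) = 2 * (y ^ 6 - 1) := by
    zify [hy2, hy6, (by omega : y ≤ y ^ 2 + 1)]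
    ring
  rwa [e] at h

set_option maxHeartbeats 2000000 in
lemma practical_C_step {x : ℕ} (hx : 3 ≤ x) (h : Practical (2 * (x ^ 70 + 1))) :
    Practical (2 * (x ^ 210 + 1)) := by
  have hx1 : 1 ≤ x := by omega
  have hp : ∀ a b : ℕ, a ≤ b → x ^ a ≤ x ^ b := fun a b hab => Nat.pow_le_pow_right hx1 hab
  have h9 : 9 ≤ x ^ 2 := by nlinarith
  have h27 : 27 ≤ x ^ 3 := by nlinarith
  have hcoef : ∀ (c a b : ℕ), c ≤ x ^ b → c * x ^ a ≤ x ^ (b + a) := by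
    intro c a b hc
    calc c * x ^ a ≤ x ^ b * x ^ a := Nat.mul_le_mul_right _ hc
    _ = x ^ (b + a) := (pow_add x b a).symm
  -- the four cofactors
  set n1 := x ^ 4 + 1 - x ^ 2 with hn1def
  set n2 := x ^ 16 + x ^ 14 + x ^ 2 + 1 - (x ^ 10 + x ^ 8 + x ^ 6) with hn2def
  set n3 := x ^ 24 + x ^ 22 + x ^ 12 + x ^ 2 + 1 - (x ^ 18 + x ^ 16 + x ^ 8 + x ^ 6) with hn3def
  set n4 := x ^ 96 + x ^ 92 + x ^ 86 + 2 * x ^ 82 + x ^ 78 + x ^ 72 + x ^ 68 + x ^ 64 +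
      x ^ 32 + x ^ 28 + x ^ 24 + x ^ 18 + 2 * x ^ 14 + x ^ 10 + x ^ 4 + 1 -
      (x ^ 94 + x ^ 84 + x ^ 80 + x ^ 70 + x ^ 66 + x ^ 62 + x ^ 56 + x ^ 52 + x ^ 48 +
       x ^ 44 + x ^ 40 + x ^ 34 + x ^ 30 + x ^ 26 + x ^ 16 + x ^ 12 + x ^ 2) with hn4def
  -- subtraction side conditions
  have hs1 : x ^ 2 ≤ x ^ 4 + 1 := by have := hp 2 4 (by norm_num); omega
  have hs2 : x ^ 10 + x ^ 8 + x ^ 6 ≤ x ^ 16 + x ^ 14 + x ^ 2 + 1 := by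
    have e1 : x ^ 2 * x ^ 10 = x ^ 12 := by ring
    have l1 : 3 * x ^ 10 ≤ x ^ 12 := hcoef 3 10 2 (by omega)
    have := hp 8 10 (by norm_num); have := hp 6 10 (by norm_num)
    have := hp 12 16 (by norm_num)
    omega
  have hs3 : x ^ 18 + x ^ 16 + x ^ 8 + x ^ 6 ≤ x ^ 24 + x ^ 22 + x ^ 12 + x ^ 2 + 1 := by
    have e1 : x ^ 2 * x ^ 18 = x ^ 20 := by ring
    have l1 : 4 * x ^ 18 ≤ x ^ 20 := hcoef 4 18 2 (by omega)
    have := hp 16 18 (by norm_num); have := hp 8 18 (by norm_num)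
    have := hp 6 18 (by norm_num); have := hp 20 24 (by norm_num)
    omega
  have hnegle : x ^ 94 + x ^ 84 + x ^ 80 + x ^ 70 + x ^ 66 + x ^ 62 + x ^ 56 + x ^ 52 + x ^ 48 +
       x ^ 44 + x ^ 40 + x ^ 34 + x ^ 30 + x ^ 26 + x ^ 16 + x ^ 12 + x ^ 2 ≤ 2 * x ^ 94 := by
    have l1 : 16 * x ^ 84 ≤ x ^ 87 := hcoef 16 84 3 (by omega)
    have := hp 87 94 (by norm_num)
    have := hp 80 84 (by norm_num); have := hp 70 84 (by norm_num)
    have := hp 66 84 (by norm_num); have := hp 62 84 (by norm_num)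
    have := hp 56 84 (by norm_num); have := hp 52 84 (by norm_num)
    have := hp 48 84 (by norm_num); have := hp 44 84 (by norm_num)
    have := hp 40 84 (by norm_num); have := hp 34 84 (by norm_num)
    have := hp 30 84 (by norm_num); have := hp 26 84 (by norm_num)
    have := hp 16 84 (by norm_num); have := hp 12 84 (by norm_num)
    have := hp 2 84 (by norm_num)
    omega
  have h9496 : 9 * x ^ 94 ≤ x ^ 96 := hcoef 9 94 2 (by omega)
  have hs4 : x ^ 94 + x ^ 84 + x ^ 80 + x ^ 70 + x ^ 66 + x ^ 62 + x ^ 56 + x ^ 52 + x ^ 48 +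
       x ^ 44 + x ^ 40 + x ^ 34 + x ^ 30 + x ^ 26 + x ^ 16 + x ^ 12 + x ^ 2 ≤
      x ^ 96 + x ^ 92 + x ^ 86 + 2 * x ^ 82 + x ^ 78 + x ^ 72 + x ^ 68 + x ^ 64 +
      x ^ 32 + x ^ 28 + x ^ 24 + x ^ 18 + 2 * x ^ 14 + x ^ 10 + x ^ 4 + 1 := by omega
  -- positivity and lower bounds of the cofactors
  have ln1 : x ^ 2 ≤ n1 := by
    have : 2 * x ^ 2 ≤ x ^ 4 := hcoef 2 2 2 (by omega)
    omega
  have ln2 : x ^ 13 ≤ n2 := by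
    have e1 : x ^ 3 * x ^ 13 = x ^ 16 := by ring
    have l1 : 27 * x ^ 13 ≤ x ^ 16 := hcoef 27 13 3 (by omega)
    have := hp 10 13 (by norm_num); have := hp 8 13 (by norm_num)
    have := hp 6 13 (by norm_num)
    omega
  have ln3 : x ^ 21 ≤ n3 := by
    have e1 : x ^ 3 * x ^ 21 = x ^ 24 := by ring
    have l1 : 27 * x ^ 21 ≤ x ^ 24 := hcoef 27 21 3 (by omega)
    have := hp 18 21 (by norm_num); have := hp 16 21 (by norm_num)
    have := hp 8 21 (by norm_num); have := hp 6 21 (by norm_num)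
    omega
  have ln4 : 1 ≤ n4 := by omega
  -- upper bounds (chain conditions)
  have hb1 : n1 ≤ 2 * (2 * (x ^ 70 + 1)) := by
    have := hp 4 70 (by norm_num); omega
  have one_le_n1 : 1 ≤ n1 := le_trans (Nat.one_le_pow _ _ (by omega)) ln1
  have h := practical_mul_le h one_le_n1 hb1
  have hM1 : 2 * (x ^ 70 + 1) ≤ 2 * (x ^ 70 + 1) * n1 :=
    Nat.le_mul_of_pos_right _ one_le_n1
  have hb2 : n2 ≤ 2 * (2 * (x ^ 70 + 1) * n1) := by
    have l1 : 4 * x ^ 16 ≤ x ^ 18 := hcoef 4 16 2 (by omega)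
    have := hp 14 16 (by norm_num); have := hp 2 16 (by norm_num)
    have := hp 18 70 (by norm_num); have := hp 0 16 (by norm_num)
    omega
  have h := practical_mul_le h (le_trans (Nat.one_le_pow _ _ (by omega)) ln2) hb2
  have hM2 : 2 * (x ^ 70 + 1) * n1 ≤ 2 * (x ^ 70 + 1) * n1 * n2 :=
    Nat.le_mul_of_pos_right _ (le_trans (Nat.one_le_pow _ _ (by omega)) ln2)
  have hb3 : n3 ≤ 2 * (2 * (x ^ 70 + 1) * n1 * n2) := by
    have l1 : 5 * x ^ 24 ≤ x ^ 26 := hcoef 5 24 2 (by omega)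
    have := hp 22 24 (by norm_num); have := hp 12 24 (by norm_num)
    have := hp 2 24 (by norm_num); have := hp 0 24 (by norm_num)
    have := hp 26 70 (by norm_num)
    omega
  have h := practical_mul_le h (le_trans (Nat.one_le_pow _ _ (by omega)) ln3) hb3
  have hb4 : n4 ≤ 2 * (2 * (x ^ 70 + 1) * n1 * n2 * n3) := by
    have lup : n4 ≤ 18 * x ^ 96 := by
      have := hp 92 96 (by norm_num); have := hp 86 96 (by norm_num)
      have := hp 82 96 (by norm_num); have := hp 78 96 (by norm_num)
      have := hp 72 96 (by norm_num); have := hp 68 96 (by norm_num)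
      have := hp 64 96 (by norm_num); have := hp 32 96 (by norm_num)
      have := hp 28 96 (by norm_num); have := hp 24 96 (by norm_num)
      have := hp 18 96 (by norm_num); have := hp 14 96 (by norm_num)
      have := hp 10 96 (by norm_num); have := hp 4 96 (by norm_num)
      have := hp 0 96 (by norm_num)
      omega
    have l99 : 18 * x ^ 96 ≤ x ^ 99 := hcoef 18 96 3 (by omega)
    have lmid : x ^ 99 ≤ x ^ 106 := hp 99 106 (by norm_num)
    have lbig : 2 * x ^ 70 * x ^ 2 * x ^ 13 * x ^ 21 ≤ 2 * (x ^ 70 + 1) * n1 * n2 * n3 := by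
      gcongr <;> first
        | omega
        | exact ln1
        | exact ln2
        | exact ln3
    have e : 2 * x ^ 70 * x ^ 2 * x ^ 13 * x ^ 21 = 2 * x ^ 106 := by ring
    omega
  have h := practical_mul_le h ln4 hb4
  have e : 2 * (x ^ 70 + 1) * n1 * n2 * n3 * n4 = 2 * (x ^ 210 + 1) := by
    rw [hn1def, hn2def, hn3def, hn4def]
    zify [hs1, hs2, hs3, hs4]
    ring
  rwa [e] at h

lemma three_le_pow (n : ℕ) (hn : 1 ≤ n) : 3 ≤ 3 ^ n :=
  le_trans (by norm_num) (Nat.pow_le_pow_right (by norm_num) hn)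

lemma practical_Ak (k : ℕ) : Practical (2 * (3 ^ (3 ^ k * 70) - 1)) := by
  induction k with
  | zero => simpa using practical_A0
  | succ k ih =>
    have e1 : (3:ℕ) ^ (3 ^ k * 70) = (3 ^ (3 ^ k * 35)) ^ 2 := by
      rw [← pow_mul]; ring_nf
    have e2 : (3:ℕ) ^ (3 ^ (k + 1) * 70) = (3 ^ (3 ^ k * 35)) ^ 6 := by
      rw [← pow_mul]; ring_nf
    rw [e1] at ih
    rw [e2]
    exact practical_A_step (three_le_pow _ (by have := Nat.one_le_pow k 3 (by norm_num); omega)) ih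

lemma practical_Ck (k : ℕ) : Practical (2 * (3 ^ (3 ^ k * 70) + 1)) := by
  induction k with
  | zero => simpa using practical_C0
  | succ k ih =>
    have e1 : (3:ℕ) ^ (3 ^ k * 70) = (3 ^ (3 ^ k)) ^ 70 := by
      rw [← pow_mul]
    have e2 : (3:ℕ) ^ (3 ^ (k + 1) * 70) = (3 ^ (3 ^ k)) ^ 210 := by
      rw [← pow_mul]; ring_nf
    rw [e1] at ih
    rw [e2]
    exact practical_C_step (three_le_pow _ (by have := Nat.one_le_pow k 3 (by norm_num); omega)) ih

lemma pyth_gen (y : ℕ) (hy : 1 ≤ y) :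
    (2 * (y ^ 2 - 1)) ^ 2 + (4 * y) ^ 2 = (2 * (y ^ 2 + 1)) ^ 2 := by
  have h1 : 1 ≤ y ^ 2 := Nat.one_le_pow _ _ (by omega)
  zify [h1]
  ring

lemma pyth_k (k : ℕ) :
    (2 * (3 ^ (3 ^ k * 70) - 1)) ^ 2 + (4 * 3 ^ (3 ^ k * 35)) ^ 2
      = (2 * (3 ^ (3 ^ k * 70) + 1)) ^ 2 := by
  have e1 : (3:ℕ) ^ (3 ^ k * 70) = (3 ^ (3 ^ k * 35)) ^ 2 := by
    rw [← pow_mul]; ring_nf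
  rw [e1]
  exact pyth_gen _ (Nat.one_le_pow _ _ (by norm_num))

lemma gcd_k (k : ℕ) :
    Nat.gcd (2 * (3 ^ (3 ^ k * 70) - 1))
      (Nat.gcd (4 * 3 ^ (3 ^ k * 35)) (2 * (3 ^ (3 ^ k * 70) + 1))) = 4 := by
  set s := 3 ^ k * 35 with hs
  have hset : 3 ^ k * 70 = 2 * s := by rw [hs]; ring
  rw [hset]
  -- 3^(2s) = 9^s
  have e9 : (3:ℕ) ^ (2 * s) = 9 ^ s := by
    rw [pow_mul]; norm_num
  rw [e9]
  -- 9^s ≡ 1 mod 8, so 9^s = 8*t+1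
  have h8 : 9 ^ s % 8 = 1 := by
    rw [Nat.pow_mod]; norm_num
  obtain ⟨t, ht⟩ : ∃ t, 9 ^ s = 8 * t + 1 := ⟨9 ^ s / 8, by omega⟩
  -- C = 4 * v with v odd coprime to 3
  have hv : 2 * (9 ^ s + 1) = 4 * (4 * t + 1) := by omega
  have hA : 2 * (9 ^ s - 1) = 4 * (4 * t) := by omega
  rw [hv, hA]
  have hg1 : Nat.gcd (4 * 3 ^ s) (4 * (4 * t + 1)) = 4 * Nat.gcd (3 ^ s) (4 * t + 1) := by
    rw [Nat.gcd_mul_left]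
  have hco : Nat.gcd (3 ^ s) (4 * t + 1) = 1 := by
    apply Nat.Coprime.pow_left
    have h3 : ¬ (3 ∣ (4 * t + 1)) := by
      intro hdvd
      have hs1 : 1 ≤ s := by
        have := Nat.one_le_pow k 3 (by norm_num)
        omega
      have h3s : (3:ℕ) ∣ 9 ^ s :=
        dvd_trans (by norm_num) (dvd_pow_self 9 (by omega))
      -- 9^s = 8t+1 ; 3 ∣ 4t+1 and 3 ∣ 9^s : 3 ∣ 8t+1 = 2*(4t+1) - 1
      obtain ⟨u, hu⟩ := hdvd
      obtain ⟨w, hw⟩ := h3s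
      omega
    exact (Nat.Prime.coprime_iff_not_dvd (by norm_num)).mpr h3
  rw [hg1, hco, mul_one]
  rw [Nat.gcd_comm]
  exact Nat.gcd_eq_left ⟨4 * t, rfl⟩

theorem practical_pythagorean_gcd_four :
    {t : ℕ × ℕ × ℕ | 0 < t.1 ∧ 0 < t.2.1 ∧ 0 < t.2.2 ∧
      t.1 ^ 2 + t.2.1 ^ 2 = t.2.2 ^ 2 ∧
      Practical t.1 ∧ Practical t.2.1 ∧ Practical t.2.2 ∧
      Nat.gcd t.1 (Nat.gcd t.2.1 t.2.2) = 4}.Infinite ∧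
    ∀ k : ℕ,
      (2 * (3 ^ (3 ^ k * 70) - 1)) ^ 2 + (4 * 3 ^ (3 ^ k * 35)) ^ 2
        = (2 * (3 ^ (3 ^ k * 70) + 1)) ^ 2 ∧
      Nat.gcd (2 * (3 ^ (3 ^ k * 70) - 1))
        (Nat.gcd (4 * 3 ^ (3 ^ k * 35)) (2 * (3 ^ (3 ^ k * 70) + 1))) = 4 ∧
      Practical (2 * (3 ^ (3 ^ k * 70) - 1)) ∧
      Practical (4 * 3 ^ (3 ^ k * 35)) ∧
      Practical (2 * (3 ^ (3 ^ k * 70) + 1)) := by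
  constructor
  · apply Set.infinite_of_injective_forall_mem
      (f := fun k : ℕ => (2 * (3 ^ (3 ^ k * 70) - 1), 4 * 3 ^ (3 ^ k * 35),
        2 * (3 ^ (3 ^ k * 70) + 1)))
    · intro k l hkl
      have h2 : 4 * 3 ^ (3 ^ k * 35) = 4 * 3 ^ (3 ^ l * 35) := congrArg (fun t => t.2.1) hkl
      have h3 : (3:ℕ) ^ (3 ^ k * 35) = 3 ^ (3 ^ l * 35) := by omega
      have h4 : 3 ^ k * 35 = 3 ^ l * 35 :=
        Nat.pow_right_injective (by norm_num) h3
      have h5 : (3:ℕ) ^ k = 3 ^ l := by omega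
      exact Nat.pow_right_injective (by norm_num) h5
    · intro k
      have hx : 3 ≤ (3:ℕ) ^ (3 ^ k * 70) := by
        calc (3:ℕ) = 3 ^ 1 := by norm_num
        _ ≤ 3 ^ (3 ^ k * 70) := Nat.pow_le_pow_right (by norm_num)
            (by have := Nat.one_le_pow k 3 (by norm_num); omega)
      simp only [Set.mem_setOf_eq]
      refine ⟨by omega, by positivity, by omega, pyth_k k, practical_Ak k,
        practical_B _, practical_Ck k, gcd_k k⟩
  · exact fun k => ⟨pyth_k k, gcd_k k, practical_Ak k, practical_B _, practical_Ck k⟩
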